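/- Let g be a real Lie algebra with an abelian complex structure J and a J-invariant inner product satisfying the pluriclosed identity g([y,z],[w,x]) - g([x,z],[w,y]) + g([x,y],[w,z]) = 0 for all x,y,z,w. Then for all x,y ∈ g: ‖[x,y]‖² + ‖[x,Jy]‖² = g([x,Jx],[y,Jy]). -/
import Mathlib


/-- With an abelian complex structure and a J-invariant pluriclosed
inner product, `‖[x,y]‖² + ‖[x,Jy]‖² = g([x,Jx],[y,Jy])`. -/
theorem pluriclosed_norm_identity
    {L : Type*} [LieRing L] [LieAlgebra ℝ L]
    (J : L →ₗ[ℝ] L)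
    (hJ2 : ∀ x : L, J (J x) = -x)
    (hab : ∀ x y : L, ⁅J x, J y⁆ = ⁅x, y⁆)
    (g : L →ₗ[ℝ] L →ₗ[ℝ] ℝ)
    (hsymm : ∀ x y : L, g x y = g y x)
    (hpos : ∀ x : L, x ≠ 0 → 0 < g x x)
    (hJinv : ∀ x y : L, g (J x) (J y) = g x y)
    (hpc : ∀ x y z w : L, g ⁅y, z⁆ ⁅w, x⁆ - g ⁅x, z⁆ ⁅w, y⁆ + g ⁅x, y⁆ ⁅w, z⁆ = 0) :
    ∀ x y : L, g ⁅x, y⁆ ⁅x, y⁆ + g ⁅x, J y⁆ ⁅x, J y⁆ = g ⁅x, J x⁆ ⁅y, J y⁆ := by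
  intro x y
  -- [a, Jb] = [b, Ja]
  have hswap : ∀ a b : L, ⁅a, J b⁆ = ⁅b, J a⁆ := by
    intro a b
    have h0 := hab (J a) b
    rw [hJ2, neg_lie] at h0
    rw [← lie_skew b (J a), ← h0, neg_neg]
  have h := hpc x (J y) (J x) y
  rw [hab, hswap y x] at h
  have hyx : g ⁅y, x⁆ ⁅y, x⁆ = g ⁅x, y⁆ ⁅x, y⁆ := by
    simp only [← lie_skew y x, map_neg, LinearMap.neg_apply, neg_neg]
  linarith
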